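/- arXiv:2107.05156 — 2 statements merged into one kernel-verified Lean document; each statement's English description precedes it below -/
import Mathlib

section
/- Let p be a primitive polynomial of degree k ≥ 1 over 𝔽₂ and n ≥ k. A vector v = (v_0, …, v_{n−1}) ∈ 𝔽₂^n satisfies Σ_{i=0}^{n−1} v_i w_i = 0 for every codeword w ∈ C(p, n) if and only if the polynomial v(x) = Σ_{i=0}^{n−1} v_i x^i is divisible in 𝔽₂[x] by the reciprocal polynomial p*(x) = x^k p(1/x). Consequently, the dual code C(p, n)^⊥ equals the polynomial code {u(x) p*(x) : u ∈ 𝔽₂[x], deg(u p*) < n} (viewed as coefficient vectors in 𝔽₂^n), and it has dimension n − k. -/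
/-- A polynomial `p` over 𝔽₂ is primitive of degree `k` if it is irreducible of degree `k`
and the residue class of `X` in `𝔽₂[x]/(p)` has multiplicative order `2^k - 1`. -/
def IsPrimitivePoly (k : ℕ) (p : Polynomial (ZMod 2)) : Prop :=
  p.natDegree = k ∧ Irreducible p ∧ orderOf (AdjoinRoot.root p) = 2 ^ k - 1

/-- The PR code `C(p, n)`: vectors `v ∈ 𝔽₂ⁿ` with `∑_{i=0}^{k} p_i v_{m-i} = 0`
for all `k ≤ m ≤ n - 1`. -/
def PRCode (k n : ℕ) (p : Polynomial (ZMod 2)) : Set (Fin n → ZMod 2) :=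
  {v | ∀ m : Fin n, k ≤ (m : ℕ) →
    ∑ i ∈ Finset.range (k + 1),
      p.coeff i * v ⟨(m : ℕ) - i, lt_of_le_of_lt (Nat.sub_le _ _) m.isLt⟩ = 0}

/-- The reciprocal polynomial `p*(x) = x^k p(1/x) = ∑_{i=0}^{k} p_{k-i} x^i`. -/
noncomputable def recipPoly (k : ℕ) (p : Polynomial (ZMod 2)) : Polynomial (ZMod 2) :=
  ∑ i ∈ Finset.range (k + 1), Polynomial.C (p.coeff (k - i)) * Polynomial.X ^ i

/-- The polynomial `v(x) = ∑_{i=0}^{n-1} v_i x^i` associated to a vector `v ∈ 𝔽₂ⁿ`. -/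
noncomputable def vecPoly (n : ℕ) (v : Fin n → ZMod 2) : Polynomial (ZMod 2) :=
  ∑ i : Fin n, Polynomial.C (v i) * Polynomial.X ^ (i : ℕ)

open Polynomial Finset

/-- Extension of a vector to ℕ by zero. -/
noncomputable def wext (n : ℕ) (w : Fin n → ZMod 2) : ℕ → ZMod 2 :=
  fun i => if h : i < n then w ⟨i, h⟩ else 0

lemma wext_lt (n : ℕ) (w : Fin n → ZMod 2) (i : ℕ) (h : i < n) :
    wext n w i = w ⟨i, h⟩ := dif_pos h

/-- The recurrence sequence with initial values `init`. -/
noncomputable def prSeq (k : ℕ) (p : Polynomial (ZMod 2)) (init : Fin k → ZMod 2) : ℕ → ZMod 2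
  | m =>
    if h : m < k then init ⟨m, h⟩
    else if h0 : m = 0 then 0
    else ∑ t ∈ Finset.range k, p.coeff (t + 1) * prSeq k p init (m - (t + 1))
  decreasing_by omega

lemma prSeq_lt (k : ℕ) (p : Polynomial (ZMod 2)) (init : Fin k → ZMod 2) (m : ℕ) (h : m < k) :
    prSeq k p init m = init ⟨m, h⟩ := by rw [prSeq.eq_def]; simp [h]

lemma prSeq_ge (k : ℕ) (p : Polynomial (ZMod 2)) (init : Fin k → ZMod 2) (m : ℕ) (h : ¬ m < k)
    (h0 : m ≠ 0) :
    prSeq k p init m = ∑ t ∈ Finset.range k, p.coeff (t + 1) * prSeq k p init (m - (t + 1)) := by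
  rw [prSeq.eq_def]; simp [h, h0]

lemma zmod2_add_self (a : ZMod 2) : a + a = 0 := by fin_cases a <;> decide

lemma zmod2_ne_zero (a : ZMod 2) (h : a ≠ 0) : a = 1 := by revert a h; decide

lemma prSeq_mem_PRCode (k n : ℕ) (p : Polynomial (ZMod 2)) (hk : 1 ≤ k) (hp0 : p.coeff 0 = 1)
    (init : Fin k → ZMod 2) :
    (fun i : Fin n => prSeq k p init i) ∈ PRCode k n p := by
  intro m hm
  have hrec := prSeq_ge k p init m (by omega) (by omega)
  rw [Finset.sum_range_succ']
  have h1 : ∀ t ∈ Finset.range k,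
      p.coeff (t + 1) * (fun i : Fin n => prSeq k p init i)
          ⟨(m : ℕ) - (t + 1), lt_of_le_of_lt (Nat.sub_le _ _) m.isLt⟩
      = p.coeff (t + 1) * prSeq k p init ((m : ℕ) - (t + 1)) := by
    intro t _; simp
  rw [Finset.sum_congr rfl h1, ← hrec]
  simp only [Nat.sub_zero, hp0, one_mul]
  exact zmod2_add_self _

lemma recip_coeff (k : ℕ) (p : Polynomial (ZMod 2)) (j : ℕ) :
    (recipPoly k p).coeff j = if j ≤ k then p.coeff (k - j) else 0 := by
  unfold recipPoly
  simp only [Polynomial.C_mul_X_pow_eq_monomial, Polynomial.finset_sum_coeff,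
    Polynomial.coeff_monomial]
  rw [Finset.sum_ite_eq' (Finset.range (k+1)) j (fun i => p.coeff (k - i))]
  simp only [Finset.mem_range]
  by_cases h : j ≤ k
  · rw [if_pos (by omega), if_pos h]
  · rw [if_neg (by omega), if_neg h]

lemma coeff_k_eq_one (k : ℕ) (p : Polynomial (ZMod 2)) (hp : IsPrimitivePoly k p) :
    p.coeff k = 1 := by
  obtain ⟨hd, hirr, _⟩ := hp
  exact zmod2_ne_zero _ (by rw [← hd]; exact Polynomial.leadingCoeff_ne_zero.mpr hirr.ne_zero)

lemma coeff_zero_eq_one (k : ℕ) (p : Polynomial (ZMod 2)) (hk : 1 ≤ k)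
    (hp : IsPrimitivePoly k p) : p.coeff 0 = 1 := by
  obtain ⟨hd, hirr, hord⟩ := hp
  apply zmod2_ne_zero
  intro h0
  have hdvd : Polynomial.X ∣ p := Polynomial.X_dvd_iff.mpr h0
  obtain ⟨u, hu⟩ := Polynomial.irreducible_X.associated_of_dvd hirr hdvd
  have hu1 : (u : Polynomial (ZMod 2)) = Polynomial.C ((u : Polynomial (ZMod 2)).coeff 0) := by
    obtain ⟨r, hr, hCr⟩ := Polynomial.isUnit_iff.mp u.isUnit
    rw [← hCr]; simp
  have hpX : p = Polynomial.X := by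
    rw [← hu, hu1]
    have hc : (u : Polynomial (ZMod 2)).coeff 0 = 1 := by
      apply zmod2_ne_zero
      intro h
      have hne := u.isUnit.ne_zero
      rw [hu1, h] at hne; simp at hne
    rw [hc]; simp
  have hk1 : k = 1 := by rw [hpX] at hd; simpa using hd.symm
  rw [hk1] at hord
  norm_num at hord
  have hmk : AdjoinRoot.mk p (Polynomial.X - 1) = 0 := by
    have hroot : AdjoinRoot.mk p Polynomial.X = AdjoinRoot.root p := rfl
    rw [map_sub, map_one, hroot, hord, sub_self]
  rw [AdjoinRoot.mk_eq_zero, hpX] at hmk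
  exact absurd (Polynomial.X_dvd_iff.mp hmk) (by simp)

lemma recip_natDegree (k : ℕ) (p : Polynomial (ZMod 2)) (hk : 1 ≤ k)
    (hp : IsPrimitivePoly k p) : (recipPoly k p).natDegree = k := by
  have h1 : (recipPoly k p).coeff k = 1 := by
    rw [recip_coeff]; simp [coeff_zero_eq_one k p hk hp]
  apply le_antisymm
  · rw [Polynomial.natDegree_le_iff_coeff_eq_zero]
    intro N hN
    rw [recip_coeff, if_neg (by omega)]
  · exact Polynomial.le_natDegree_of_ne_zero (by rw [h1]; exact one_ne_zero)

lemma recip_monic (k : ℕ) (p : Polynomial (ZMod 2)) (hk : 1 ≤ k)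
    (hp : IsPrimitivePoly k p) : (recipPoly k p).Monic := by
  unfold Polynomial.Monic Polynomial.leadingCoeff
  rw [recip_natDegree k p hk hp, recip_coeff]
  simp [coeff_zero_eq_one k p hk hp]

lemma recip_ne_zero (k : ℕ) (p : Polynomial (ZMod 2)) (hk : 1 ≤ k)
    (hp : IsPrimitivePoly k p) : recipPoly k p ≠ 0 :=
  (recip_monic k p hk hp).ne_zero

lemma recip_degree (k : ℕ) (p : Polynomial (ZMod 2)) (hk : 1 ≤ k)
    (hp : IsPrimitivePoly k p) : (recipPoly k p).degree = (k : ℕ) := by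
  rw [Polynomial.degree_eq_natDegree (recip_ne_zero k p hk hp), recip_natDegree k p hk hp]

/-- The reflected recurrence: `∑_t p*_t w_{j+t} = 0` for `j + k < n`. -/
lemma reflected_recurrence (k n : ℕ) (p : Polynomial (ZMod 2)) (w : Fin n → ZMod 2)
    (hw : w ∈ PRCode k n p) (j : ℕ) (hj : j + k < n) :
    ∑ t ∈ Finset.range (k + 1), (recipPoly k p).coeff t * wext n w (j + t) = 0 := by
  have hcode := hw ⟨j + k, hj⟩ (by simp)
  have hcode' : ∑ i ∈ Finset.range (k + 1), p.coeff i * wext n w (j + k - i) = 0 := by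
    rw [← hcode]
    apply Finset.sum_congr rfl
    intro i _
    congr 1
    exact wext_lt n w _ (by omega)
  calc ∑ t ∈ Finset.range (k + 1), (recipPoly k p).coeff t * wext n w (j + t)
      = ∑ t ∈ Finset.range (k + 1),
          (fun t => (recipPoly k p).coeff t * wext n w (j + t)) ((k + 1) - 1 - t) := by
        exact (Finset.sum_range_reflect
          (fun t => (recipPoly k p).coeff t * wext n w (j + t)) (k + 1)).symm
    _ = ∑ t ∈ Finset.range (k + 1), p.coeff t * wext n w (j + k - t) := by
        apply Finset.sum_congr rfl
        intro t ht
        rw [Finset.mem_range] at ht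
        simp only
        rw [recip_coeff, if_pos (by omega)]
        congr 2 <;> omega
    _ = 0 := hcode'

/-- Forward direction core: products with `p*` are orthogonal to codewords. -/
lemma ortho_of_mul (k n : ℕ) (hk : 1 ≤ k) (hn : k ≤ n) (p : Polynomial (ZMod 2))
    (hp : IsPrimitivePoly k p) (q : Polynomial (ZMod 2))
    (hq : (q * recipPoly k p).degree < (n : ℕ))
    (w : Fin n → ZMod 2) (hw : w ∈ PRCode k n p) :
    ∑ i ∈ Finset.range n, (q * recipPoly k p).coeff i * wext n w i = 0 := by
  by_cases hq0 : q = 0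
  · simp [hq0]
  have hqd : q.natDegree < n - k := by
    have hmul0 : q * recipPoly k p ≠ 0 := mul_ne_zero hq0 (recip_ne_zero k p hk hp)
    have := (Polynomial.natDegree_lt_iff_degree_lt hmul0).mpr hq
    rw [Polynomial.natDegree_mul hq0 (recip_ne_zero k p hk hp),
      recip_natDegree k p hk hp] at this
    omega
  calc ∑ i ∈ Finset.range n, (q * recipPoly k p).coeff i * wext n w i
      = ∑ i ∈ Finset.range n, ∑ j ∈ Finset.range (i + 1),
          q.coeff j * (recipPoly k p).coeff (i - j) * wext n w i := by
        apply Finset.sum_congr rfl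
        intro i _
        rw [Polynomial.coeff_mul, Finset.Nat.sum_antidiagonal_eq_sum_range_succ_mk,
          Finset.sum_mul]
    _ = ∑ j ∈ Finset.range n, ∑ i ∈ Finset.Ico j n,
          q.coeff j * (recipPoly k p).coeff (i - j) * wext n w i := by
        apply Finset.sum_comm'
        intro i j
        simp only [Finset.mem_range, Finset.mem_Ico]
        omega
    _ = ∑ j ∈ Finset.range n, ∑ t ∈ Finset.range (n - j),
          q.coeff j * (recipPoly k p).coeff t * wext n w (j + t) := by
        apply Finset.sum_congr rfl
        intro j _
        rw [Finset.sum_Ico_eq_sum_range]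
        apply Finset.sum_congr rfl
        intro t _
        have hjt : j + t - j = t := by omega
        rw [hjt]
    _ = 0 := by
        apply Finset.sum_eq_zero
        intro j hj
        rw [Finset.mem_range] at hj
        by_cases hjk : j < n - k
        · have hsub : ∑ t ∈ Finset.range (n - j),
              q.coeff j * (recipPoly k p).coeff t * wext n w (j + t)
              = ∑ t ∈ Finset.range (k + 1),
              q.coeff j * (recipPoly k p).coeff t * wext n w (j + t) := by
            symm
            apply Finset.sum_subset
            · intro t ht
              rw [Finset.mem_range] at *
              omega
            · intro t _ ht
              rw [Finset.mem_range] at ht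
              have hPt : (recipPoly k p).coeff t = 0 :=
                Polynomial.coeff_eq_zero_of_natDegree_lt
                  (by rw [recip_natDegree k p hk hp]; omega)
              rw [hPt]
              ring
          rw [hsub]
          have hassoc : ∑ t ∈ Finset.range (k + 1),
              q.coeff j * (recipPoly k p).coeff t * wext n w (j + t)
              = q.coeff j * ∑ t ∈ Finset.range (k + 1),
                (recipPoly k p).coeff t * wext n w (j + t) := by
            rw [Finset.mul_sum]
            exact Finset.sum_congr rfl fun t _ => mul_assoc _ _ _
          rw [hassoc, reflected_recurrence k n p w hw j (by omega), mul_zero]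
        · have : q.coeff j = 0 :=
            Polynomial.coeff_eq_zero_of_natDegree_lt (by omega)
          simp [this]


lemma vecPoly_coeff (n : ℕ) (v : Fin n → ZMod 2) (i : ℕ) :
    (vecPoly n v).coeff i = if h : i < n then v ⟨i, h⟩ else 0 := by
  unfold vecPoly
  simp only [Polynomial.C_mul_X_pow_eq_monomial, Polynomial.finset_sum_coeff,
    Polynomial.coeff_monomial]
  by_cases h : i < n
  · rw [dif_pos h]
    have heq : ∀ j : Fin n, (if (j : ℕ) = i then v j else 0)
        = if j = ⟨i, h⟩ then v j else 0 := by
      intro j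
      congr 1
      simp [Fin.ext_iff]
    rw [Finset.sum_congr rfl fun j _ => heq j,
      Finset.sum_ite_eq' Finset.univ (⟨i, h⟩ : Fin n) v]
    simp
  · rw [dif_neg h]
    apply Finset.sum_eq_zero
    intro j _
    rw [if_neg (by omega)]

lemma vecPoly_degree (n : ℕ) (v : Fin n → ZMod 2) : (vecPoly n v).degree < (n : ℕ) := by
  rw [Polynomial.degree_lt_iff_coeff_zero]
  intro m hm
  rw [vecPoly_coeff, dif_neg (by omega)]

lemma sum_fin_eq (n : ℕ) (v w : Fin n → ZMod 2) :
    ∑ i : Fin n, v i * w i = ∑ i ∈ Finset.range n, (vecPoly n v).coeff i * wext n w i := by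
  rw [← Fin.sum_univ_eq_sum_range (fun i => (vecPoly n v).coeff i * wext n w i) n]
  apply Finset.sum_congr rfl
  intro i _
  rw [vecPoly_coeff, dif_pos i.isLt, wext_lt n w _ i.isLt]

/-- Main forward direction. -/
lemma ortho_of_dvd (k n : ℕ) (hk : 1 ≤ k) (hn : k ≤ n) (p : Polynomial (ZMod 2))
    (hp : IsPrimitivePoly k p) (v : Fin n → ZMod 2) (hdvd : recipPoly k p ∣ vecPoly n v)
    (w : Fin n → ZMod 2) (hw : w ∈ PRCode k n p) :
    ∑ i : Fin n, v i * w i = 0 := by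
  obtain ⟨u, hu⟩ := hdvd
  rw [sum_fin_eq]
  have hv : vecPoly n v = u * recipPoly k p := by rw [hu, mul_comm]
  rw [hv]
  exact ortho_of_mul k n hk hn p hp u (by rw [← hv]; exact vecPoly_degree n v) w hw

/-- Converse direction. -/
lemma dvd_of_ortho (k n : ℕ) (hk : 1 ≤ k) (hn : k ≤ n) (p : Polynomial (ZMod 2))
    (hp : IsPrimitivePoly k p) (v : Fin n → ZMod 2)
    (hor : ∀ w ∈ PRCode k n p, ∑ i : Fin n, v i * w i = 0) :
    recipPoly k p ∣ vecPoly n v := by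
  set P := recipPoly k p with hP
  have hmon : P.Monic := recip_monic k p hk hp
  set r := vecPoly n v %ₘ P with hr
  set q := vecPoly n v /ₘ P with hq
  have hdecomp : r + P * q = vecPoly n v := Polynomial.modByMonic_add_div _ P
  have hrdeg : r.degree < (k : ℕ) := by
    have := Polynomial.degree_modByMonic_lt (vecPoly n v) hmon
    rwa [recip_degree k p hk hp] at this
  have hkn : ((k : ℕ) : WithBot ℕ) ≤ ((n : ℕ) : WithBot ℕ) := by exact_mod_cast hn
  have hqPdeg : (q * P).degree < (n : ℕ) := by
    have h1 : q * P = vecPoly n v - r := by rw [← hdecomp]; ring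
    rw [h1]
    apply lt_of_le_of_lt (Polynomial.degree_sub_le _ _)
    exact max_lt (vecPoly_degree n v) (lt_of_lt_of_le hrdeg hkn)
  have hror : ∀ w ∈ PRCode k n p, ∑ i ∈ Finset.range n, r.coeff i * wext n w i = 0 := by
    intro w hw
    have h1 := ortho_of_mul k n hk hn p hp q hqPdeg w hw
    have h2 := hor w hw
    rw [sum_fin_eq] at h2
    have h3 : ∀ i, r.coeff i = (vecPoly n v).coeff i - (q * P).coeff i := by
      intro i
      have hre : r = vecPoly n v - q * P := by rw [← hdecomp]; ring
      rw [hre, Polynomial.coeff_sub]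
    calc ∑ i ∈ Finset.range n, r.coeff i * wext n w i
        = ∑ i ∈ Finset.range n, ((vecPoly n v).coeff i * wext n w i
            - (q * P).coeff i * wext n w i) := by
          apply Finset.sum_congr rfl
          intro i _
          rw [h3 i, sub_mul]
      _ = 0 := by rw [Finset.sum_sub_distrib, h1, h2, sub_zero]
  have hp0 : p.coeff 0 = 1 := coeff_zero_eq_one k p hk hp
  have hrzero : r = 0 := by
    apply Polynomial.ext
    intro j
    simp only [Polynomial.coeff_zero]
    by_cases hjk : j < k
    · have hjn : j < n := by omega
      let init : Fin k → ZMod 2 := fun i => if (i : ℕ) = j then 1 else 0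
      let w : Fin n → ZMod 2 := fun i => prSeq k p init i
      have hw : w ∈ PRCode k n p := prSeq_mem_PRCode k n p hk hp0 init
      have hwval : ∀ (i : ℕ), i < k → ∀ (hin : i < n),
          wext n w i = (if i = j then 1 else 0 : ZMod 2) := by
        intro i hik hin
        rw [wext_lt n w i hin]
        show prSeq k p init ((⟨i, hin⟩ : Fin n) : ℕ) = _
        have hval : ((⟨i, hin⟩ : Fin n) : ℕ) = i := rfl
        rw [hval, prSeq_lt k p init i hik]
      have hsum := hror w hw
      have heval : ∑ i ∈ Finset.range n, r.coeff i * wext n w i = r.coeff j := by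
        rw [Finset.sum_eq_single j]
        · rw [hwval j hjk hjn, if_pos rfl, mul_one]
        · intro i hi hij
          rw [Finset.mem_range] at hi
          by_cases hik : i < k
          · rw [hwval i hik hi, if_neg hij, mul_zero]
          · rw [Polynomial.coeff_eq_zero_of_degree_lt
              (lt_of_lt_of_le hrdeg (by exact_mod_cast Nat.cast_le.mpr (by omega : k ≤ i)))]
            ring
        · intro hj
          rw [Finset.mem_range] at hj
          omega
      rw [heval] at hsum
      exact hsum
    · exact Polynomial.coeff_eq_zero_of_degree_lt
        (lt_of_lt_of_le hrdeg (by exact_mod_cast Nat.cast_le.mpr (by omega : k ≤ j)))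
  rw [← Polynomial.modByMonic_eq_zero_iff_dvd hmon]
  exact hrzero

/-- The linear map sending a vector to its polynomial. -/
noncomputable def vecPolyLin (n : ℕ) : (Fin n → ZMod 2) →ₗ[ZMod 2] Polynomial (ZMod 2) where
  toFun := vecPoly n
  map_add' v w := by
    unfold vecPoly
    rw [← Finset.sum_add_distrib]
    apply Finset.sum_congr rfl
    intro i _
    simp [add_mul]
  map_smul' c v := by
    unfold vecPoly
    simp only [RingHom.id_apply, Finset.smul_sum]
    apply Finset.sum_congr rfl
    intro i _
    simp [Polynomial.smul_eq_C_mul, mul_assoc]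


/-- `v` is orthogonal to every codeword of `C(p, n)` iff `p*(x)` divides `v(x)`;
consequently the dual code is the polynomial code generated by `p*` and has dimension `n - k`. -/
theorem stmt6 (k n : ℕ) (hk : 1 ≤ k) (hn : k ≤ n)
    (p : Polynomial (ZMod 2)) (hp : IsPrimitivePoly k p) :
    (∀ v : Fin n → ZMod 2,
      (∀ w ∈ PRCode k n p, ∑ i : Fin n, v i * w i = 0) ↔ recipPoly k p ∣ vecPoly n v) ∧
    {v : Fin n → ZMod 2 | ∀ w ∈ PRCode k n p, ∑ i : Fin n, v i * w i = 0}
      = {v : Fin n → ZMod 2 | ∃ u : Polynomial (ZMod 2),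
          (u * recipPoly k p).degree < (n : ℕ) ∧ vecPoly n v = u * recipPoly k p} ∧
    ∃ D : Submodule (ZMod 2) (Fin n → ZMod 2),
      (D : Set (Fin n → ZMod 2))
          = {v : Fin n → ZMod 2 | ∀ w ∈ PRCode k n p, ∑ i : Fin n, v i * w i = 0} ∧
      Module.finrank (ZMod 2) D = n - k := by
  have part1 : ∀ v : Fin n → ZMod 2,
      (∀ w ∈ PRCode k n p, ∑ i : Fin n, v i * w i = 0) ↔ recipPoly k p ∣ vecPoly n v := by
    intro v
    constructor
    · exact dvd_of_ortho k n hk hn p hp v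
    · exact fun hdvd w hw => ortho_of_dvd k n hk hn p hp v hdvd w hw
  refine ⟨part1, ?_, ?_⟩
  · ext v
    simp only [Set.mem_setOf_eq]
    rw [part1 v]
    constructor
    · rintro ⟨u, hu⟩
      refine ⟨u, ?_, by rw [hu, mul_comm]⟩
      rw [mul_comm, ← hu]
      exact vecPoly_degree n v
    · rintro ⟨u, _, hu⟩
      exact ⟨u, by rw [hu, mul_comm]⟩
  · set P := recipPoly k p with hP
    have hmon : P.Monic := recip_monic k p hk hp
    set f : (Fin n → ZMod 2) →ₗ[ZMod 2] Polynomial (ZMod 2) :=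
      (Polynomial.modByMonicHom P).comp (vecPolyLin n) with hf
    have hfapp : ∀ v, f v = vecPoly n v %ₘ P := by
      intro v
      simp [hf, vecPolyLin, Polynomial.modByMonicHom_apply]
    refine ⟨LinearMap.ker f, ?_, ?_⟩
    · ext v
      simp only [SetLike.mem_coe, LinearMap.mem_ker, Set.mem_setOf_eq]
      rw [hfapp v, Polynomial.modByMonic_eq_zero_iff_dvd hmon, part1 v]
    · have hrange : LinearMap.range f = Polynomial.degreeLT (ZMod 2) k := by
        apply le_antisymm
        · rintro _ ⟨v, rfl⟩
          rw [Polynomial.mem_degreeLT, hfapp v]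
          have := Polynomial.degree_modByMonic_lt (vecPoly n v) hmon
          rwa [recip_degree k p hk hp] at this
        · intro q hq
          rw [Polynomial.mem_degreeLT] at hq
          have hqn : q.natDegree < n := by
            by_cases hq0 : q = 0
            · simp [hq0]; omega
            · have := (Polynomial.natDegree_lt_iff_degree_lt hq0).mpr hq
              omega
          refine ⟨fun i : Fin n => q.coeff i, ?_⟩
          have hvq : vecPoly n (fun i : Fin n => q.coeff i) = q := by
            unfold vecPoly
            conv_rhs => rw [Polynomial.as_sum_range' q n hqn]
            rw [← Fin.sum_univ_eq_sum_range (fun i => Polynomial.monomial i (q.coeff i)) n]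
            apply Finset.sum_congr rfl
            intro i _
            rw [Polynomial.C_mul_X_pow_eq_monomial]
          rw [hfapp, hvq]
          rw [(Polynomial.modByMonic_eq_self_iff hmon).mpr]
          rw [recip_degree k p hk hp]
          exact hq
      have hrank := LinearMap.finrank_range_add_finrank_ker f
      rw [hrange, Module.finrank_fin_fun] at hrank
      have hdl : Module.finrank (ZMod 2) (Polynomial.degreeLT (ZMod 2) k) = k := by
        rw [(Polynomial.degreeLTEquiv (ZMod 2) k).finrank_eq, Module.finrank_fin_fun]
      rw [hdl] at hrank
      omega
end

section
/- Let k ≥ 2 and let p₁ and p₂ be any two primitive polynomials of degree k over 𝔽₂. Then for every t ≥ 1, the number of polynomials q ∈ 𝔽₂[x] with q(0) = 1, degree at most 2^k − 2, and exactly t nonzero coefficients that are divisible by p₁ equals the corresponding number for p₂; that is, the count N_{k,t} of t-nomial multiples of degree at most 2^k − 2 of a primitive polynomial of degree k does not depend on the choice of the primitive polynomial. -/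
open Polynomial
lemma coeff_sum_X_pow (E : Finset ℕ) (m : ℕ) :
    (∑ e ∈ E, (X : Polynomial (ZMod 2)) ^ e).coeff m = if m ∈ E then 1 else 0 := by
  rw [Polynomial.finset_sum_coeff]
  simp only [Polynomial.coeff_X_pow]
  rw [Finset.sum_ite_eq E m (fun _ => (1 : ZMod 2))]

lemma zmod2_eq_one : ∀ a : ZMod 2, a ≠ 0 → a = 1 := by decide

lemma eq_sum_X_pow (q : Polynomial (ZMod 2)) : q = ∑ e ∈ q.support, X ^ e := by
  ext m
  rw [coeff_sum_X_pow]
  by_cases h : m ∈ q.support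
  · simp only [h, if_true]
    exact zmod2_eq_one _ (Polynomial.mem_support_iff.mp h)
  · simp [Polynomial.notMem_support_iff.mp h, h]

lemma support_sum_X_pow (E : Finset ℕ) :
    (∑ e ∈ E, (X : Polynomial (ZMod 2)) ^ e).support = E := by
  ext m
  rw [Polynomial.mem_support_iff, coeff_sum_X_pow]
  by_cases h : m ∈ E <;> simp [h]

section Main

variable {n : ℕ}

lemma hmod {a b : ℕ} (h : a * b % n = 1) {e : ℕ} (he : e < n) :
    b * (a * e % n) % n = e := by
  conv_lhs => rw [Nat.mul_mod, Nat.mod_mod_of_dvd _ dvd_rfl, ← Nat.mul_mod]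
  rw [show b * (a * e) = (a * b) * e by ring, Nat.mul_mod, h, one_mul,
    Nat.mod_mod_of_dvd _ dvd_rfl, Nat.mod_eq_of_lt he]

/-- The exponent-multiplication map on polynomials. -/
noncomputable def F (n c : ℕ) (q : Polynomial (ZMod 2)) : Polynomial (ZMod 2) :=
  ∑ e ∈ q.support.image (fun e => c * e % n), X ^ e

lemma F_support (c : ℕ) (q : Polynomial (ZMod 2)) :
    (F n c q).support = q.support.image (fun e => c * e % n) :=
  support_sum_X_pow _

lemma supp_lt (hn : 0 < n) {q : Polynomial (ZMod 2)} (hdeg : q.natDegree ≤ n - 1)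
    {e : ℕ} (he : e ∈ q.support) : e < n := by
  have := Polynomial.le_natDegree_of_mem_supp e he
  omega

lemma inj_on_supp {c c' : ℕ} (h : c * c' % n = 1) {q : Polynomial (ZMod 2)}
    (hlt : ∀ e ∈ q.support, e < n) :
    ∀ x ∈ q.support, ∀ y ∈ q.support, c * x % n = c * y % n → x = y := by
  intro x hx y hy hxy
  have := hmod h (hlt x hx)
  have := hmod h (hlt y hy)
  rw [hxy] at *
  omega

lemma F_mem (hn : 1 < n) {c c' : ℕ} (h : c * c' % n = 1) {q : Polynomial (ZMod 2)}
    (h0 : q.coeff 0 = 1) (hdeg : q.natDegree ≤ n - 1) :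
    (F n c q).coeff 0 = 1 ∧ (F n c q).natDegree ≤ n - 1 ∧
      (F n c q).support.card = q.support.card := by
  have hlt : ∀ e ∈ q.support, e < n := fun e he => supp_lt (by omega) hdeg he
  refine ⟨?_, ?_, ?_⟩
  · rw [F, coeff_sum_X_pow, if_pos]
    exact Finset.mem_image.mpr ⟨0, Polynomial.mem_support_iff.mpr (by rw [h0]; exact one_ne_zero),
      by simp⟩
  · rw [Polynomial.natDegree_le_iff_coeff_eq_zero]
    intro N hN
    rw [F, coeff_sum_X_pow, if_neg]
    intro hmem
    obtain ⟨e, _, rfl⟩ := Finset.mem_image.mp hmem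
    have : c * e % n < n := Nat.mod_lt _ (by omega)
    omega
  · rw [F_support]
    exact Finset.card_image_of_injOn (inj_on_supp h hlt)

lemma F_F (hn : 1 < n) {c c' : ℕ} (h : c * c' % n = 1) {q : Polynomial (ZMod 2)}
    (hdeg : q.natDegree ≤ n - 1) : F n c' (F n c q) = q := by
  have hlt : ∀ e ∈ q.support, e < n := fun e he => supp_lt (by omega) hdeg he
  rw [F, F_support, Finset.image_image]
  have : Finset.image ((fun e => c' * e % n) ∘ fun e => c * e % n) q.support = q.support := by
    apply Finset.image_congr (g := id) ?_ |>.trans (Finset.image_id)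
    intro e he
    exact hmod h (hlt e he)
  rw [this]
  exact (eq_sum_X_pow q).symm

end Main

lemma F_dvd {n s s' : ℕ} (h : s * s' % n = 1) {p₁ p₂ : Polynomial (ZMod 2)}
    (ho₂ : orderOf (AdjoinRoot.root p₂) = n)
    (hiff : ∀ E : Finset ℕ,
      ((∑ e ∈ E, (AdjoinRoot.root p₁) ^ e = 0) ↔
        (∑ e ∈ E, (AdjoinRoot.root p₂) ^ (s * e) = 0)))
    {q : Polynomial (ZMod 2)} (hlt : ∀ e ∈ q.support, e < n) :
    p₁ ∣ q ↔ p₂ ∣ F n s q := by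
  rw [← AdjoinRoot.mk_eq_zero, ← AdjoinRoot.mk_eq_zero]
  have h₁ : AdjoinRoot.mk p₁ q = ∑ e ∈ q.support, (AdjoinRoot.root p₁) ^ e := by
    conv_lhs => rw [eq_sum_X_pow q]
    rw [map_sum]
    simp only [map_pow, AdjoinRoot.mk_X]
  have h₂ : AdjoinRoot.mk p₂ (F n s q) = ∑ e ∈ q.support, (AdjoinRoot.root p₂) ^ (s * e) := by
    rw [F, map_sum]
    simp only [map_pow, AdjoinRoot.mk_X]
    rw [Finset.sum_image (inj_on_supp h hlt)]
    refine Finset.sum_congr rfl fun e _ => ?_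
    rw [← ho₂, pow_mod_orderOf]
  rw [h₁, h₂]
  exact hiff q.support

lemma exists_s (k : ℕ) (hk : 2 ≤ k) (p₁ p₂ : Polynomial (ZMod 2))
    (hp₁ : IsPrimitivePoly k p₁) (hp₂ : IsPrimitivePoly k p₂) :
    ∃ s s' : ℕ, s * s' % (2 ^ k - 1) = 1 ∧
      ∀ E : Finset ℕ,
        ((∑ e ∈ E, (AdjoinRoot.root p₁) ^ e = 0) ↔
          (∑ e ∈ E, (AdjoinRoot.root p₂) ^ (s * e) = 0)) := by
  classical
  obtain ⟨hd₁, hirr₁, ho₁⟩ := hp₁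
  obtain ⟨hd₂, hirr₂, ho₂⟩ := hp₂
  haveI : Fact (Irreducible p₁) := ⟨hirr₁⟩
  haveI : Fact (Irreducible p₂) := ⟨hirr₂⟩
  haveI : Module.Finite (ZMod 2) (AdjoinRoot p₁) :=
    Module.Finite.of_basis (AdjoinRoot.powerBasis hirr₁.ne_zero).basis
  haveI : Module.Finite (ZMod 2) (AdjoinRoot p₂) :=
    Module.Finite.of_basis (AdjoinRoot.powerBasis hirr₂.ne_zero).basis
  haveI : Finite (AdjoinRoot p₁) := Module.finite_of_finite (ZMod 2)
  haveI : Finite (AdjoinRoot p₂) := Module.finite_of_finite (ZMod 2)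
  haveI : Fintype (AdjoinRoot p₁) := Fintype.ofFinite _
  haveI : Fintype (AdjoinRoot p₂) := Fintype.ofFinite _
  have hcard₁ : Fintype.card (AdjoinRoot p₁) = 2 ^ k := by
    rw [Module.card_eq_pow_finrank (K := ZMod 2), ZMod.card,
      (AdjoinRoot.powerBasis hirr₁.ne_zero).finrank, AdjoinRoot.powerBasis_dim, hd₁]
  have hcard₂ : Fintype.card (AdjoinRoot p₂) = 2 ^ k := by
    rw [Module.card_eq_pow_finrank (K := ZMod 2), ZMod.card,
      (AdjoinRoot.powerBasis hirr₂.ne_zero).finrank, AdjoinRoot.powerBasis_dim, hd₂]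
  haveI : Fact (Nat.Prime 2) := ⟨Nat.prime_two⟩
  set φ := FiniteField.algEquivOfCardEq (K := AdjoinRoot p₁) (K' := AdjoinRoot p₂) 2
    (hcard₁.trans hcard₂.symm) with hφ
  set α₁ := AdjoinRoot.root p₁
  set α₂ := AdjoinRoot.root p₂
  set n := 2 ^ k - 1 with hn
  have h4 : 4 ≤ 2 ^ k := by
    calc (4 : ℕ) = 2 ^ 2 := by norm_num
    _ ≤ 2 ^ k := Nat.pow_le_pow_right (by norm_num) hk
  have hn1 : 1 < n := by omega
  have hoφ : orderOf (φ α₁) = n := by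
    exact (MulEquiv.orderOf_eq φ.toMulEquiv α₁).trans ho₁
  have hα₂ne : α₂ ≠ 0 := by
    intro h
    have h1 : α₂ ^ n = 1 := ho₂ ▸ pow_orderOf_eq_one α₂
    rw [h, zero_pow (by omega)] at h1
    exact zero_ne_one h1
  have hαφne : φ α₁ ≠ 0 := by
    intro h
    have h1 : (φ α₁) ^ n = 1 := hoφ ▸ pow_orderOf_eq_one _
    rw [h, zero_pow (by omega)] at h1
    exact zero_ne_one h1
  have hu₂ : IsUnit α₂ := isUnit_iff_ne_zero.mpr hα₂ne
  have huφ : IsUnit (φ α₁) := isUnit_iff_ne_zero.mpr hαφne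
  have hou₂ : orderOf hu₂.unit = n := by rw [← orderOf_units, hu₂.unit_spec]; exact ho₂
  have houφ : orderOf huφ.unit = n := by rw [← orderOf_units, huφ.unit_spec]; exact hoφ
  have hcardu : Nat.card (AdjoinRoot p₂)ˣ = n := by
    rw [Nat.card_eq_fintype_card, Fintype.card_units, hcard₂]
  have htop : Subgroup.zpowers hu₂.unit = ⊤ :=
    Subgroup.eq_top_of_card_eq _ (by rw [Nat.card_zpowers, hou₂, hcardu])
  have hmem : huφ.unit ∈ Submonoid.powers hu₂.unit := by
    rw [mem_powers_iff_mem_zpowers, htop]; trivial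
  obtain ⟨s, hs⟩ := (Submonoid.mem_powers_iff _ _).mp hmem
  have hαs : α₂ ^ s = φ α₁ := by
    rw [← hu₂.unit_spec, ← huφ.unit_spec, ← hs, Units.val_pow_eq_pow_val]
  have hcop : Nat.Coprime s n := by
    have horder : orderOf (hu₂.unit ^ s) = n := by rw [hs, houφ]
    rw [orderOf_pow, hou₂] at horder
    have := (Nat.div_eq_self).mp horder
    have hg1 : n.gcd s = 1 := by omega
    exact Nat.coprime_comm.mp hg1
  obtain ⟨s', -, hss'⟩ := Nat.exists_mul_mod_eq_one_of_coprime hcop hn1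
  refine ⟨s, s', hss', fun E => ?_⟩
  have key : φ (∑ e ∈ E, α₁ ^ e) = ∑ e ∈ E, α₂ ^ (s * e) := by
    rw [map_sum]
    refine Finset.sum_congr rfl fun e _ => ?_
    rw [map_pow, ← hαs, ← pow_mul]
  rw [← key]
  exact ⟨fun h => by rw [h, map_zero], fun h => by
    have := congrArg φ.symm h
    rwa [AlgEquiv.symm_apply_apply, map_zero] at this⟩

/-- The number of `t`-nomial multiples (constant term 1, degree at most
`2^k - 2`, exactly `t` nonzero coefficients) of a primitive polynomial of degree `k ≥ 2`
does not depend on the choice of the primitive polynomial. -/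
theorem stmt17 (k : ℕ) (hk : 2 ≤ k)
    (p₁ p₂ : Polynomial (ZMod 2))
    (hp₁ : IsPrimitivePoly k p₁) (hp₂ : IsPrimitivePoly k p₂) :
    ∀ t : ℕ, 1 ≤ t →
      {q : Polynomial (ZMod 2) |
          q.coeff 0 = 1 ∧ q.natDegree ≤ 2 ^ k - 2 ∧ q.support.card = t ∧ p₁ ∣ q}.ncard
        = {q : Polynomial (ZMod 2) |
          q.coeff 0 = 1 ∧ q.natDegree ≤ 2 ^ k - 2 ∧ q.support.card = t ∧ p₂ ∣ q}.ncard := by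
  intro t ht
  classical
  obtain ⟨s, s', hss', hiff⟩ := exists_s k hk p₁ p₂ hp₁ hp₂
  set n := 2 ^ k - 1 with hn
  have h4 : 4 ≤ 2 ^ k := by
    calc (4 : ℕ) = 2 ^ 2 := by norm_num
    _ ≤ 2 ^ k := Nat.pow_le_pow_right (by norm_num) hk
  have hn1 : 1 < n := by omega
  have hdeg_eq : 2 ^ k - 2 = n - 1 := by omega
  have hs's : s' * s % n = 1 := by rwa [mul_comm]
  have ho₂ : orderOf (AdjoinRoot.root p₂) = n := hp₂.2.2
  have himg : {q : Polynomial (ZMod 2) |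
          q.coeff 0 = 1 ∧ q.natDegree ≤ 2 ^ k - 2 ∧ q.support.card = t ∧ p₂ ∣ q}
      = (F n s) '' {q : Polynomial (ZMod 2) |
          q.coeff 0 = 1 ∧ q.natDegree ≤ 2 ^ k - 2 ∧ q.support.card = t ∧ p₁ ∣ q} := by
    ext q'
    simp only [Set.mem_image, Set.mem_setOf_eq]
    constructor
    · rintro ⟨h0, hdeg, hcard, hdvd⟩
      rw [hdeg_eq] at hdeg
      obtain ⟨a0, adeg, acard⟩ := F_mem hn1 hs's h0 hdeg
      have hfg : F n s (F n s' q') = q' := F_F hn1 hs's hdeg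
      have hlt' : ∀ e ∈ (F n s' q').support, e < n :=
        fun e he => supp_lt (by omega) adeg he
      have hdvd' := F_dvd hss' ho₂ hiff hlt'
      rw [hfg] at hdvd'
      exact ⟨F n s' q', ⟨a0, hdeg_eq ▸ adeg, acard.trans hcard, hdvd'.mpr hdvd⟩, hfg⟩
    · rintro ⟨q, ⟨h0, hdeg, hcard, hdvd⟩, rfl⟩
      rw [hdeg_eq] at hdeg ⊢
      obtain ⟨a0, adeg, acard⟩ := F_mem hn1 hss' h0 hdeg
      exact ⟨a0, adeg, acard.trans hcard,
        (F_dvd hss' ho₂ hiff (fun e he => supp_lt (by omega) hdeg he)).mp hdvd⟩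
  rw [himg, Set.ncard_image_of_injOn]
  intro a ha b hb hab
  have hda : a.natDegree ≤ n - 1 := hdeg_eq ▸ ha.2.1
  have hdb : b.natDegree ≤ n - 1 := hdeg_eq ▸ hb.2.1
  calc a = F n s' (F n s a) := (F_F hn1 hss' hda).symm
    _ = F n s' (F n s b) := by rw [hab]
    _ = b := F_F hn1 hss' hdb
end
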